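/- Suppose every counterfactual is valid on its own model (M_i(c_i) ≠ M_i(x) for all i). Define the AAF whose arguments are the pairs (M_i, c_i) with ((M_i,c_i),(M_j,c_j)) an attack iff M_i ⪰ M_j and (M_i(x) ≠ M_j(x) or M_i(c_j) = M_i(x) or M_j(c_i) = M_j(x)). Then the map sending a set of pairs P to f(P) = { M_i, c_i : (M_i,c_i) ∈ P } is a bijection between the preferred extensions of this AAF and the s-preferred extensions of the MM-BAF, with inverse f⁻¹(Q) = { (M_i,c_i) : M_i ∈ Q and c_i ∈ Q }. -/
import Mathlib


/-- Set-attack in a bipolar argumentation framework: direct, indirect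
(attack followed by a nonempty chain of supports), or supported
(nonempty chain of supports followed by an attack). -/
def SetAttacks {α : Type*} (att sup : α → α → Prop) (T : Set α) (a : α) : Prop :=
  ∃ b ∈ T, att b a ∨ (∃ c, att b c ∧ Relation.TransGen sup c a) ∨
    (∃ c, Relation.TransGen sup b c ∧ att c a)

def SetSupports {α : Type*} (sup : α → α → Prop) (T : Set α) (a : α) : Prop :=
  ∃ b ∈ T, sup b a

def ConflictFree {α : Type*} (att sup : α → α → Prop) (T : Set α) : Prop :=
  ∀ a ∈ T, ¬ SetAttacks att sup T a

def Safe {α : Type*} (att sup : α → α → Prop) (T : Set α) : Prop :=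
  ¬ ∃ a, SetAttacks att sup T a ∧ (SetSupports sup T a ∨ a ∈ T)

def Defends {α : Type*} (att sup : α → α → Prop) (T : Set α) (a : α) : Prop :=
  ∀ b, SetAttacks att sup {b} a → ∃ c ∈ T, SetAttacks att sup {c} b

def DAdmissible {α : Type*} (att sup : α → α → Prop) (T : Set α) : Prop :=
  ConflictFree att sup T ∧ ∀ a ∈ T, Defends att sup T a

def SAdmissible {α : Type*} (att sup : α → α → Prop) (T : Set α) : Prop :=
  Safe att sup T ∧ ∀ a ∈ T, Defends att sup T a

def CAdmissible {α : Type*} (att sup : α → α → Prop) (T : Set α) : Prop :=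
  ConflictFree att sup T ∧ (∀ a ∈ T, ∀ b, sup a b → b ∈ T) ∧ ∀ a ∈ T, Defends att sup T a

def DPreferred {α : Type*} (att sup : α → α → Prop) (T : Set α) : Prop :=
  DAdmissible att sup T ∧ ∀ U, DAdmissible att sup U → T ⊆ U → U = T

def SPreferred {α : Type*} (att sup : α → α → Prop) (T : Set α) : Prop :=
  SAdmissible att sup T ∧ ∀ U, SAdmissible att sup U → T ⊆ U → U = T

def CPreferred {α : Type*} (att sup : α → α → Prop) (T : Set α) : Prop :=
  CAdmissible att sup T ∧ ∀ U, CAdmissible att sup U → T ⊆ U → U = T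

def Stable {α : Type*} (att sup : α → α → Prop) (T : Set α) : Prop :=
  ConflictFree att sup T ∧ ∀ a, a ∉ T → SetAttacks att sup T a

/-- Attack relation of the BAF corresponding to an MM instance.
Sum.inl i is the argument for model M_i, Sum.inr i the one for CE c_i.
ge i j means M_i ⪰ M_j. -/
def mmAtt {X ι : Type*} (Mod : ι → X → Bool) (c : ι → X) (x : X)
    (ge : ι → ι → Prop) : ι ⊕ ι → ι ⊕ ι → Prop
  | Sum.inl i, Sum.inl j => Mod i x ≠ Mod j x ∧ ge i j
  | Sum.inl i, Sum.inr j => Mod i (c j) = Mod i x ∧ ge i j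
  | Sum.inr j, Sum.inl i => Mod i (c j) = Mod i x ∧ ge j i
  | Sum.inr _, Sum.inr _ => False

/-- Support relation of the MM-BAF: mutual supports between M_i and c_i. -/
def mmSup {ι : Type*} : ι ⊕ ι → ι ⊕ ι → Prop
  | Sum.inl i, Sum.inr j => i = j
  | Sum.inr i, Sum.inl j => i = j
  | _, _ => False

def ConflictFreeA {α : Type*} (att : α → α → Prop) (S : Set α) : Prop :=
  ∀ a ∈ S, ∀ b ∈ S, ¬ att a b

def DefendsA {α : Type*} (att : α → α → Prop) (S : Set α) (a : α) : Prop :=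
  ∀ b, att b a → ∃ c ∈ S, att c b

def AdmissibleA {α : Type*} (att : α → α → Prop) (S : Set α) : Prop :=
  ConflictFreeA att S ∧ ∀ a ∈ S, DefendsA att S a

def PreferredA {α : Type*} (att : α → α → Prop) (S : Set α) : Prop :=
  AdmissibleA att S ∧ ∀ T, AdmissibleA att T → S ⊆ T → T = S

/-- Attack relation of the AAF on model-counterfactual pairs. -/
def aafAtt {X ι : Type*} (Mod : ι → X → Bool) (c : ι → X) (x : X)
    (ge : ι → ι → Prop) (i j : ι) : Prop :=
  ge i j ∧ (Mod i x ≠ Mod j x ∨ Mod i (c j) = Mod i x ∨ Mod j (c i) = Mod j x)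

section MMaux

variable {X ι : Type*} {Mod : ι → X → Bool} {c : ι → X} {x : X} {ge : ι → ι → Prop}

/-- Index of an argument: which model/counterfactual pair it belongs to. -/
def mmIdx : ι ⊕ ι → ι := Sum.elim id id

lemma mmSup_idx {a b : ι ⊕ ι} (h : mmSup a b) : mmIdx a = mmIdx b := by
  cases a <;> cases b <;> simp_all [mmSup, mmIdx]

lemma mmTransGen_iff {a b : ι ⊕ ι} :
    Relation.TransGen (mmSup (ι := ι)) a b ↔ mmIdx a = mmIdx b := by
  constructor
  · intro h
    induction h with
    | single h => exact mmSup_idx h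
    | tail _ h ih => exact ih.trans (mmSup_idx h)
  · intro h
    cases a with
    | inl i =>
      cases b with
      | inl j =>
        have : i = j := h
        subst this
        exact Relation.TransGen.head (b := Sum.inr i)
          (by simp [mmSup]) (Relation.TransGen.single (by simp [mmSup]))
      | inr j =>
        have : i = j := h
        subst this
        exact Relation.TransGen.single (by simp [mmSup])
    | inr i =>
      cases b with
      | inl j =>
        have : i = j := h
        subst this
        exact Relation.TransGen.single (by simp [mmSup])
      | inr j =>
        have : i = j := h
        subst this
        exact Relation.TransGen.head (b := Sum.inl i)
          (by simp [mmSup]) (Relation.TransGen.single (by simp [mmSup]))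

lemma mmAtt_aaf {a b : ι ⊕ ι} (h : mmAtt Mod c x ge a b) :
    aafAtt Mod c x ge (mmIdx a) (mmIdx b) := by
  cases a <;> cases b <;> simp_all [mmAtt, aafAtt, mmIdx]

lemma aaf_mmAtt {i j : ι} (h : aafAtt Mod c x ge i j) :
    ∃ a b : ι ⊕ ι, mmIdx a = i ∧ mmIdx b = j ∧ mmAtt Mod c x ge a b := by
  obtain ⟨hge, h1 | h2 | h3⟩ := h
  · exact ⟨Sum.inl i, Sum.inl j, rfl, rfl, h1, hge⟩
  · exact ⟨Sum.inl i, Sum.inr j, rfl, rfl, h2, hge⟩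
  · exact ⟨Sum.inr i, Sum.inl j, rfl, rfl, h3, hge⟩

lemma mmSetAtt_of {T : Set (ι ⊕ ι)} {b' c' a : ι ⊕ ι} (hb : b' ∈ T)
    (h : mmAtt Mod c x ge b' c') (hi : mmIdx c' = mmIdx a) :
    SetAttacks (mmAtt Mod c x ge) mmSup T a :=
  ⟨b', hb, Or.inr (Or.inl ⟨c', h, mmTransGen_iff.mpr hi⟩)⟩

lemma mmSetAtt_idx {T : Set (ι ⊕ ι)} {a : ι ⊕ ι}
    (h : SetAttacks (mmAtt Mod c x ge) mmSup T a) :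
    ∃ b ∈ T, aafAtt Mod c x ge (mmIdx b) (mmIdx a) := by
  obtain ⟨b, hb, h | ⟨c', h1, h2⟩ | ⟨c', h1, h2⟩⟩ := h
  · exact ⟨b, hb, mmAtt_aaf h⟩
  · refine ⟨b, hb, ?_⟩
    have := mmAtt_aaf h1
    rwa [mmTransGen_iff.mp h2] at this
  · refine ⟨b, hb, ?_⟩
    have := mmAtt_aaf h2
    rwa [← mmTransGen_iff.mp h1] at this

lemma mmEq_or_sup {a b : ι ⊕ ι} (h : mmIdx a = mmIdx b) : a = b ∨ mmSup a b := by
  cases a <;> cases b <;> simp_all [mmIdx, mmSup]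

lemma mmSadm_iff (P : Set ι) :
    SAdmissible (mmAtt Mod c x ge) mmSup (mmIdx ⁻¹' P) ↔
      AdmissibleA (aafAtt Mod c x ge) P := by
  constructor
  · rintro ⟨hsafe, hdef⟩
    constructor
    · intro i hi j hj hatt
      obtain ⟨b', c', hb', hc', hA⟩ := aaf_mmAtt hatt
      exact hsafe ⟨c', ⟨b', by simp [Set.mem_preimage, hb', hi], Or.inl hA⟩,
        Or.inr (by simp [Set.mem_preimage, hc', hj])⟩
    · intro i hi j hatt
      obtain ⟨b', c', hb', hc', hA⟩ := aaf_mmAtt hatt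
      have hc'mem : c' ∈ mmIdx ⁻¹' P := by simp [Set.mem_preimage, hc', hi]
      obtain ⟨d, hd, hsa⟩ := hdef c' hc'mem b' ⟨b', Set.mem_singleton _, Or.inl hA⟩
      obtain ⟨e, he, hA2⟩ := mmSetAtt_idx hsa
      have hed : e = d := he
      subst hed
      exact ⟨mmIdx e, hd, by rwa [hb'] at hA2⟩
  · rintro ⟨hcf, hdef⟩
    constructor
    · rintro ⟨a, hatk, hsup⟩
      obtain ⟨b, hb, hA⟩ := mmSetAtt_idx hatk
      have hia : mmIdx a ∈ P := by
        rcases hsup with ⟨b0, hb0, hs⟩ | ha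
        · rw [← mmSup_idx hs]; exact hb0
        · exact ha
      exact hcf _ hb _ hia hA
    · intro a ha b hsa
      obtain ⟨b0, hb0, hA⟩ := mmSetAtt_idx hsa
      have hb0b : b0 = b := hb0
      subst hb0b
      obtain ⟨k, hk, hA2⟩ := hdef (mmIdx a) ha (mmIdx b0) hA
      obtain ⟨b', c', hb', hc', hAtt⟩ := aaf_mmAtt hA2
      exact ⟨b', by simp [Set.mem_preimage, hb', hk],
        mmSetAtt_of (Set.mem_singleton _) hAtt hc'⟩

lemma mmAdm_image {Q : Set (ι ⊕ ι)} (h : SAdmissible (mmAtt Mod c x ge) mmSup Q) :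
    AdmissibleA (aafAtt Mod c x ge) (mmIdx '' Q) := by
  obtain ⟨hsafe, hdef⟩ := h
  constructor
  · rintro i ⟨b0, hb0, rfl⟩ j ⟨a0, ha0, rfl⟩ hatt
    obtain ⟨b', c', hb', hc', hA⟩ := aaf_mmAtt hatt
    refine hsafe ⟨c', ⟨b0, hb0, Or.inr (Or.inr ⟨b', mmTransGen_iff.mpr hb'.symm, hA⟩)⟩, ?_⟩
    rcases mmEq_or_sup (a := a0) (b := c') hc'.symm with heq | hs
    · exact Or.inr (heq ▸ ha0)
    · exact Or.inl ⟨a0, ha0, hs⟩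
  · rintro i ⟨a0, ha0, rfl⟩ j hatt
    obtain ⟨b', c', hb', hc', hA⟩ := aaf_mmAtt hatt
    obtain ⟨d, hd, hsa⟩ := hdef a0 ha0 b' (mmSetAtt_of (Set.mem_singleton _) hA hc')
    obtain ⟨e, he, hA2⟩ := mmSetAtt_idx hsa
    have hed : e = d := he
    subst hed
    exact ⟨mmIdx e, ⟨e, hd, rfl⟩, by rwa [hb'] at hA2⟩

lemma mmIdx_surj : Function.Surjective (mmIdx (ι := ι)) := fun i => ⟨Sum.inl i, rfl⟩

lemma mmSym_eq (P : Set ι) :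
    (Sum.inl '' P ∪ Sum.inr '' P : Set (ι ⊕ ι)) = mmIdx ⁻¹' P := by
  ext z; cases z <;> simp [mmIdx]

lemma mmSPref_iff (Q : Set (ι ⊕ ι)) :
    SPreferred (mmAtt Mod c x ge) mmSup Q ↔
      ∃ P : Set ι, PreferredA (aafAtt Mod c x ge) P ∧ Q = mmIdx ⁻¹' P := by
  constructor
  · rintro ⟨hadm, hmax⟩
    have hQ' : mmIdx ⁻¹' (mmIdx '' Q) = Q :=
      hmax _ ((mmSadm_iff _).mpr (mmAdm_image hadm)) (fun a ha => ⟨a, ha, rfl⟩)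
    refine ⟨mmIdx '' Q, ⟨mmAdm_image hadm, ?_⟩, hQ'.symm⟩
    intro T hT hsub
    have hU : SAdmissible (mmAtt Mod c x ge) mmSup (mmIdx ⁻¹' T) := (mmSadm_iff _).mpr hT
    have hQsub : Q ⊆ mmIdx ⁻¹' T := by
      rw [← hQ']; exact Set.preimage_mono hsub
    have hUQ : mmIdx ⁻¹' T = Q := hmax _ hU hQsub
    calc T = mmIdx '' (mmIdx ⁻¹' T) := (Set.image_preimage_eq T mmIdx_surj).symm
      _ = mmIdx '' Q := by rw [hUQ]
  · rintro ⟨P, ⟨hadm, hmax⟩, rfl⟩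
    refine ⟨(mmSadm_iff _).mpr hadm, ?_⟩
    intro U hU hsub
    have himg : AdmissibleA (aafAtt Mod c x ge) (mmIdx '' U) := mmAdm_image hU
    have hPsub : P ⊆ mmIdx '' U := by
      intro i hi
      exact ⟨Sum.inl i, hsub hi, rfl⟩
    have hUP : mmIdx '' U = P := hmax _ himg hPsub
    refine Set.Subset.antisymm ?_ hsub
    intro a ha
    have : mmIdx a ∈ mmIdx '' U := ⟨a, ha, rfl⟩
    rw [hUP] at this
    exact this

end MMaux

/-- The map sending a set P of pairs to f(P) = { M_i, c_i : (M_i, c_i) ∈ P }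
is a bijection between preferred extensions of the pair-AAF and s-preferred
extensions of the MM-BAF, with inverse Q ↦ { (M_i, c_i) : M_i ∈ Q, c_i ∈ Q }. -/
theorem aaf_baf_equivalence {X ι : Type*} (Mod : ι → X → Bool) (c : ι → X)
    (x : X) (ge : ι → ι → Prop)
    (hval : ∀ k, Mod k (c k) ≠ Mod k x)
    (hrefl : ∀ k, ge k k) (htrans : ∀ k l m, ge k l → ge l m → ge k m)
    (htot : ∀ k l, ge k l ∨ ge l k) :
    (∀ Q : Set (ι ⊕ ι), SPreferred (mmAtt Mod c x ge) mmSup Q ↔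
        ∃ P : Set ι, PreferredA (aafAtt Mod c x ge) P ∧
          Q = Sum.inl '' P ∪ Sum.inr '' P) ∧
    (∀ P : Set ι, PreferredA (aafAtt Mod c x ge) P ↔
        ∃ Q : Set (ι ⊕ ι), SPreferred (mmAtt Mod c x ge) mmSup Q ∧
          P = {i | Sum.inl i ∈ Q ∧ Sum.inr i ∈ Q}) := by
  have h1 : ∀ Q : Set (ι ⊕ ι), SPreferred (mmAtt Mod c x ge) mmSup Q ↔
      ∃ P : Set ι, PreferredA (aafAtt Mod c x ge) P ∧
        Q = Sum.inl '' P ∪ Sum.inr '' P := by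
    intro Q
    rw [mmSPref_iff]
    constructor
    · rintro ⟨P, hP, rfl⟩
      exact ⟨P, hP, (mmSym_eq P).symm⟩
    · rintro ⟨P, hP, rfl⟩
      exact ⟨P, hP, mmSym_eq P⟩
  refine ⟨h1, ?_⟩
  intro P
  constructor
  · intro hP
    refine ⟨mmIdx ⁻¹' P, (mmSPref_iff _).mpr ⟨P, hP, rfl⟩, ?_⟩
    ext i
    simp [mmIdx, Set.mem_preimage]
  · rintro ⟨Q, hQ, rfl⟩
    obtain ⟨P0, hP0, rfl⟩ := (mmSPref_iff Q).mp hQ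
    have : {i | Sum.inl i ∈ mmIdx ⁻¹' P0 ∧ Sum.inr i ∈ mmIdx ⁻¹' P0} = P0 := by
      ext i
      simp [mmIdx, Set.mem_preimage]
    rw [this]
    exact hP0
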